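/- arXiv:0802.3137 — 3 statements merged into one kernel-verified Lean document; each statement's English description precedes it below -/
import Mathlib

section
/- Let P be a finite ground normal logic program (every rule r has exactly one head atom) that is negation-stratified, i.e., there exists a function ℓ from atoms to ℕ such that for every rule r with head atom h: ℓ(a) ≤ ℓ(h) for every a ∈ B+(r) and ℓ(a) < ℓ(h) for every a ∈ B-(r). Then P has exactly one answer set. -/
/-- A ground disjunctive rule: head, positive body, negative body (finite sets of atoms). -/
structure Rule (α : Type*) where
  head : Finset α
  pos : Finset α
  neg : Finset α

/-- An interpretation `I` satisfies rule `r`. -/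
def Rule.sat {α : Type*} (I : Set α) (r : Rule α) : Prop :=
  ((∀ a ∈ r.pos, a ∈ I) ∧ (∀ a ∈ r.neg, a ∉ I)) → ∃ a ∈ r.head, a ∈ I

/-- `I` is a model of the program `P`. -/
def isModel {α : Type*} (I : Set α) (P : Set (Rule α)) : Prop :=
  ∀ r ∈ P, r.sat I

/-- The Gelfond-Lifschitz reduct `P^X`: delete rules whose negative body intersects `X`,
and strip the negative bodies from the remaining rules. -/
def reduct {α : Type*} (P : Set (Rule α)) (X : Set α) : Set (Rule α) :=
  { r' | ∃ r ∈ P, (∀ a ∈ r.neg, a ∉ X) ∧ r' = ⟨r.head, r.pos, ∅⟩ }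

/-- `X` is an answer set of `P`: `X` is a minimal model of the reduct `P^X`. -/
def isAnswerSet {α : Type*} (X : Set α) (P : Set (Rule α)) : Prop :=
  isModel X (reduct P X) ∧ ∀ Y ⊆ X, isModel Y (reduct P X) → Y = X

section Aux
variable {α : Type*}

/-- Derivability in a definite program. -/
inductive Deriv (Q : Set (Rule α)) : α → Prop
  | step (r : Rule α) (h : α) (hr : r ∈ Q) (hh : h ∈ r.head)
      (hpos : ∀ a ∈ r.pos, Deriv Q a) : Deriv Q h

/-- The Gelfond-Lifschitz operator: least model of the reduct. -/
def glOp (P : Set (Rule α)) (X : Set α) : Set α := {a | Deriv (reduct P X) a}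

lemma GL_subset_model (P : Set (Rule α)) (hnormal : ∀ r ∈ P, r.head.card = 1)
    (X I : Set α) (hI : isModel I (reduct P X)) : glOp P X ⊆ I := by
  intro a ha
  induction ha with
  | step r' h hr' hh hpos ih =>
    obtain ⟨r0, hr0, hneg, rfl⟩ := hr'
    obtain ⟨h0, hh0⟩ := Finset.card_eq_one.mp (hnormal r0 hr0)
    have hsat := hI _ ⟨r0, hr0, hneg, rfl⟩ ⟨ih, by simp⟩
    obtain ⟨b, hb, hbI⟩ := hsat
    simp only [hh0, Finset.mem_singleton] at hb hh
    subst hb; subst hh; exact hbI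

lemma isModel_GL (P : Set (Rule α)) (hnormal : ∀ r ∈ P, r.head.card = 1)
    (X : Set α) : isModel (glOp P X) (reduct P X) := by
  rintro r' ⟨r0, hr0, hneg, rfl⟩ ⟨hpos, -⟩
  obtain ⟨h0, hh0⟩ := Finset.card_eq_one.mp (hnormal r0 hr0)
  exact ⟨h0, by simp [hh0], Deriv.step _ h0 ⟨r0, hr0, hneg, rfl⟩ (by simp [hh0]) hpos⟩

lemma isAnswerSet_iff (P : Set (Rule α)) (hnormal : ∀ r ∈ P, r.head.card = 1)
    (X : Set α) : isAnswerSet X P ↔ glOp P X = X := by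
  constructor
  · rintro ⟨hmod, hmin⟩
    exact hmin _ (GL_subset_model P hnormal X X hmod) (isModel_GL P hnormal X)
  · intro hfix
    refine ⟨?_, ?_⟩
    · have h := isModel_GL P hnormal X
      rwa [hfix] at h
    intro Y hYX hY
    exact subset_antisymm hYX (hfix ▸ GL_subset_model P hnormal X Y hY)

lemma Deriv_level (P : Set (Rule α)) (ℓ : α → ℕ)
    (hstrat : ∀ r ∈ P, ∀ h ∈ r.head,
        (∀ a ∈ r.pos, ℓ a ≤ ℓ h) ∧ (∀ a ∈ r.neg, ℓ a < ℓ h))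
    (X Y : Set α) (n : ℕ) (hXY : ∀ a, ℓ a < n → (a ∈ X ↔ a ∈ Y)) :
    ∀ a, a ∈ glOp P X → ℓ a ≤ n → a ∈ glOp P Y := by
  intro a ha
  induction ha with
  | step r' h hr' hh hpos ih =>
    intro hn
    obtain ⟨r0, hr0, hneg, rfl⟩ := hr'
    have hs := hstrat r0 hr0 h hh
    refine Deriv.step _ h ⟨r0, hr0, ?_, rfl⟩ hh ?_
    · intro b hb hbY
      exact hneg b hb ((hXY b (lt_of_lt_of_le (hs.2 b hb) hn)).mpr hbY)
    · intro b hb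
      exact ih b hb (le_trans (hs.1 b hb) hn)

end Aux

/-- a finite ground normal negation-stratified program has exactly one
answer set. -/
theorem stratified_normal_unique_answerSet {α : Type*} (P : Set (Rule α)) (hP : P.Finite)
    (hnormal : ∀ r ∈ P, r.head.card = 1)
    (hstrat : ∃ ℓ : α → ℕ, ∀ r ∈ P, ∀ h ∈ r.head,
        (∀ a ∈ r.pos, ℓ a ≤ ℓ h) ∧ (∀ a ∈ r.neg, ℓ a < ℓ h)) :
    ∃! X : Set α, isAnswerSet X P := by
  obtain ⟨ℓ, hstrat⟩ := hstrat
  set S : ℕ → Set α := fun n => Nat.rec (motive := fun _ => Set α) ∅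
    (fun _ prev => glOp P prev) n with hS
  have hS1 : ∀ n, S (n + 1) = glOp P (S n) := fun _ => rfl
  have stab : ∀ n, ∀ a, ℓ a < n → (a ∈ S n ↔ a ∈ S (n + 1)) := by
    intro n
    induction n with
    | zero => intro a ha; exact absurd ha (Nat.not_lt_zero _)
    | succ n ih =>
      intro a ha
      rw [hS1 n, hS1 (n + 1)]
      constructor
      · intro h
        exact Deriv_level P ℓ hstrat (S n) (S (n + 1)) n ih a h (Nat.lt_succ_iff.mp ha)
      · intro h
        exact Deriv_level P ℓ hstrat (S (n + 1)) (S n) n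
          (fun b hb => (ih b hb).symm) a h (Nat.lt_succ_iff.mp ha)
  have stab' : ∀ m n, m ≤ n → ∀ a, ℓ a < m → (a ∈ S m ↔ a ∈ S n) := by
    intro m n hmn
    induction hmn with
    | refl => intro a _; rfl
    | @step k hk ih =>
      intro a ha
      exact (ih a ha).trans (stab k a (lt_of_lt_of_le ha hk))
  set M : Set α := {a | a ∈ S (ℓ a + 1)} with hMdef
  have hM : ∀ n, ∀ a, ℓ a < n → (a ∈ M ↔ a ∈ S n) := by
    intro n a ha
    exact (stab' (ℓ a + 1) n ha a (Nat.lt_succ_self _))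
  have hfix : glOp P M = M := by
    ext a
    constructor
    · intro h
      have h2 : a ∈ glOp P (S (ℓ a)) :=
        Deriv_level P ℓ hstrat M (S (ℓ a)) (ℓ a) (fun b hb => hM (ℓ a) b hb) a h (le_refl _)
      show a ∈ S (ℓ a + 1)
      rw [hS1]; exact h2
    · intro h
      have h2 : a ∈ glOp P (S (ℓ a)) := by
        rw [← hS1]; exact h
      exact Deriv_level P ℓ hstrat (S (ℓ a)) M (ℓ a)
        (fun b hb => (hM (ℓ a) b hb).symm) a h2 (le_refl _)
  refine ⟨M, (isAnswerSet_iff P hnormal M).mpr hfix, ?_⟩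
  intro Y hY
  have hYfix := (isAnswerSet_iff P hnormal Y).mp hY
  have key : ∀ n, ∀ a, ℓ a < n → (a ∈ Y ↔ a ∈ M) := by
    intro n
    induction n with
    | zero => intro a ha; exact absurd ha (Nat.not_lt_zero _)
    | succ n ih =>
      intro a ha
      have ha' := Nat.lt_succ_iff.mp ha
      constructor
      · intro h
        have h1 : a ∈ glOp P Y := by rw [hYfix]; exact h
        have h2 : a ∈ glOp P M := Deriv_level P ℓ hstrat Y M n ih a h1 ha'
        rwa [hfix] at h2
      · intro h
        have h1 : a ∈ glOp P M := by rw [hfix]; exact h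
        have h2 : a ∈ glOp P Y :=
          Deriv_level P ℓ hstrat M Y n (fun b hb => (ih b hb).symm) a h1 ha'
        rwa [hYfix] at h2
  ext a
  exact key (ℓ a + 1) a (Nat.lt_succ_self _)
end

section
/- The violation of a single weak constraint of priority level i is more expensive than the violation of all weak constraints of lower levels: for every level i with 1 ≤ i ≤ lmax and every w0 ∈ WC with level(w0) = i, it holds that f(i)·weight(w0) > Σ_{w ∈ WC, level(w) < i} f(level(w))·weight(w). -/
/-- violating a single weak constraint of level `i` is more expensive than
violating all weak constraints of lower levels. -/
theorem single_violation_dominates_lower_levels {ι : Type*}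
    (WC : Finset ι) (hWC : WC.Nonempty)
    (weight level : ι → ℕ) (wmax lmax : ℕ) (hlmax : 1 ≤ lmax) (hwmax : 1 ≤ wmax)
    (hw1 : ∀ w ∈ WC, 1 ≤ weight w) (hwle : ∀ w ∈ WC, weight w ≤ wmax)
    (hlev : ∀ w ∈ WC, level w ∈ Finset.Icc 1 lmax)
    (f : ℕ → ℕ) (hf1 : f 1 = 1)
    (hfs : ∀ n : ℕ, 1 ≤ n → f (n + 1) = f n * (WC.card * wmax) + 1)
    (i : ℕ) (hi1 : 1 ≤ i) (hilmax : i ≤ lmax)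
    (w0 : ι) (hw0 : w0 ∈ WC) (hlw0 : level w0 = i) :
    f i * weight w0 >
      ∑ w ∈ WC.filter (fun w => level w < i), f (level w) * weight w := by
  have hcard : 1 ≤ WC.card := Finset.card_pos.mpr hWC
  have hc : 1 ≤ WC.card * wmax := Nat.one_le_iff_ne_zero.mpr (by positivity)
  -- monotonicity of f on [1, ∞)
  have hmono : ∀ m n : ℕ, 1 ≤ m → m ≤ n → f m ≤ f n := by
    intro m n hm hmn
    induction n with
    | zero => omega
    | succ k ih =>
      rcases Nat.lt_or_ge m (k + 1) with h | h
      · have hk : 1 ≤ k := by omega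
        calc f m ≤ f k := ih (by omega)
          _ ≤ f k * (WC.card * wmax) := Nat.le_mul_of_pos_right _ hc
          _ ≤ f k * (WC.card * wmax) + 1 := Nat.le_succ _
          _ = f (k + 1) := (hfs k hk).symm
      · have : m = k + 1 := by omega
        simp [this]
  have hf1le : ∀ n, 1 ≤ n → 1 ≤ f n := fun n hn => hf1 ▸ hmono 1 n le_rfl hn
  rcases Nat.lt_or_ge i 2 with h2 | h2
  · -- i = 1: filter empty
    have : i = 1 := by omega
    subst this
    have hempty : WC.filter (fun w => level w < 1) = ∅ := by
      apply Finset.filter_eq_empty_iff.mpr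
      intro w hw
      have := hlev w hw
      simp only [Finset.mem_Icc] at this
      omega
    rw [hempty]
    simp only [Finset.sum_empty]
    have := hw1 w0 hw0
    have := hf1le 1 le_rfl
    positivity
  · -- i ≥ 2
    have him : i - 1 + 1 = i := by omega
    have hbound : ∀ w ∈ WC.filter (fun w => level w < i),
        f (level w) * weight w ≤ f (i - 1) * wmax := by
      intro w hw
      simp only [Finset.mem_filter] at hw
      have hlevw := hlev w hw.1
      simp only [Finset.mem_Icc] at hlevw
      exact Nat.mul_le_mul (hmono (level w) (i - 1) hlevw.1 (by omega))
        (hwle w hw.1)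
    calc ∑ w ∈ WC.filter (fun w => level w < i), f (level w) * weight w
        ≤ (WC.filter (fun w => level w < i)).card * (f (i - 1) * wmax) :=
          Finset.sum_le_card_nsmul _ _ _ hbound
      _ ≤ WC.card * (f (i - 1) * wmax) :=
          Nat.mul_le_mul_right _ (Finset.card_filter_le _ _)
      _ = f (i - 1) * (WC.card * wmax) := by ring
      _ < f (i - 1) * (WC.card * wmax) + 1 := Nat.lt_succ_self _
      _ = f i := by rw [← hfs (i - 1) (by omega), him]
      _ ≤ f i * weight w0 := Nat.le_mul_of_pos_right _ (hw1 w0 hw0)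
end

section
/- The objective function H realizes the lexicographic comparison of level-wise violation costs with higher levels more significant: for all V_A, V_B ⊆ WC, H(V_A) < H(V_B) if and only if there exists a level i ∈ {1,…,lmax} such that Σ_{w ∈ V_A, level(w) = j} weight(w) = Σ_{w ∈ V_B, level(w) = j} weight(w) for all j with i < j ≤ lmax, and Σ_{w ∈ V_A, level(w) = i} weight(w) < Σ_{w ∈ V_B, level(w) = i} weight(w). -/
private lemma f_pos' (f : ℕ → ℕ) (K : ℕ) (hf1 : f 1 = 1)
    (hfs : ∀ n : ℕ, 1 ≤ n → f (n + 1) = f n * K + 1) :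
    ∀ n, 1 ≤ n → 1 ≤ f n := by
  intro n hn
  induction n with
  | zero => omega
  | succ m ih =>
    rcases Nat.eq_or_lt_of_le hn with h | h
    · have hm : m = 0 := by omega
      subst hm; simpa using hf1.ge
    · have hm : 1 ≤ m := by omega
      rw [hfs m hm]; omega

private lemma f_mono' (f : ℕ → ℕ) (K : ℕ) (hK : 1 ≤ K) (hf1 : f 1 = 1)
    (hfs : ∀ n : ℕ, 1 ≤ n → f (n + 1) = f n * K + 1) :
    ∀ m n, 1 ≤ m → m ≤ n → f m ≤ f n := by
  intro m n hm hmn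
  induction n with
  | zero => omega
  | succ k ih =>
    rcases Nat.lt_or_ge m (k + 1) with h | h
    · have hk : 1 ≤ k := by omega
      have h1 : f m ≤ f k := ih (by omega)
      have h2 : f k ≤ f k * K := Nat.le_mul_of_pos_right _ hK
      rw [hfs k hk]; omega
    · have : m = k + 1 := by omega
      subst this; exact le_rfl

private lemma lex_lt (f : ℕ → ℕ) (K lmax : ℕ) (hK : 1 ≤ K) (hf1 : f 1 = 1)
    (hfs : ∀ n : ℕ, 1 ≤ n → f (n + 1) = f n * K + 1)
    (a b : ℕ → ℕ) (haK : ∑ j ∈ Finset.Icc 1 lmax, a j ≤ K)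
    (i : ℕ) (hi1 : 1 ≤ i) (hi2 : i ≤ lmax)
    (heq : ∀ j, i < j → j ≤ lmax → a j = b j) (hlt : a i < b i) :
    ∑ j ∈ Finset.Icc 1 lmax, f j * a j < ∑ j ∈ Finset.Icc 1 lmax, f j * b j := by
  have hdisj : Disjoint (Finset.Icc 1 i) (Finset.Ioc i lmax) := by
    rw [Finset.disjoint_left]
    intro x hx hx'
    simp only [Finset.mem_Icc, Finset.mem_Ioc] at hx hx'
    omega
  have hsplit : Finset.Icc 1 lmax = Finset.Icc 1 i ∪ Finset.Ioc i lmax := by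
    rw [← Finset.coe_inj, Finset.coe_union, Finset.coe_Icc, Finset.coe_Ioc, Finset.coe_Icc,
      Set.Icc_union_Ioc_eq_Icc hi1 hi2]
  rw [hsplit, Finset.sum_union hdisj, Finset.sum_union hdisj]
  have hhigh : ∑ j ∈ Finset.Ioc i lmax, f j * a j = ∑ j ∈ Finset.Ioc i lmax, f j * b j := by
    refine Finset.sum_congr rfl fun j hj => ?_
    simp only [Finset.mem_Ioc] at hj
    rw [heq j hj.1 hj.2]
  -- low part strict
  have hlow0 : ∑ j ∈ Finset.Icc 1 (i - 1), f j * a j < f i := by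
    rcases Nat.eq_or_lt_of_le hi1 with h1 | h1
    · have h0 : i - 1 = 0 := by omega
      rw [h0, Finset.Icc_eq_empty (by omega), Finset.sum_empty, ← h1, hf1]
      omega
    · have hi1' : 1 ≤ i - 1 := by omega
      have hb : ∑ j ∈ Finset.Icc 1 (i - 1), f j * a j
          ≤ f (i - 1) * ∑ j ∈ Finset.Icc 1 (i - 1), a j := by
        rw [Finset.mul_sum]
        refine Finset.sum_le_sum fun j hj => ?_
        simp only [Finset.mem_Icc] at hj
        exact Nat.mul_le_mul_right _ (f_mono' f K hK hf1 hfs j (i - 1) hj.1 hj.2)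
      have hsub : ∑ j ∈ Finset.Icc 1 (i - 1), a j ≤ K := by
        refine le_trans (Finset.sum_le_sum_of_subset ?_) haK
        exact Finset.Icc_subset_Icc le_rfl (by omega)
      have hfi : f i = f (i - 1) * K + 1 := by
        have := hfs (i - 1) hi1'
        rwa [Nat.sub_add_cancel hi1] at this
      have : f (i - 1) * ∑ j ∈ Finset.Icc 1 (i - 1), a j ≤ f (i - 1) * K :=
        Nat.mul_le_mul_left _ hsub
      omega
  have hstep : ∑ j ∈ Finset.Icc 1 i, f j * a j
      = (∑ j ∈ Finset.Icc 1 (i - 1), f j * a j) + f i * a i := by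
    have hi' : i = i - 1 + 1 := by omega
    conv_lhs => rw [hi']
    rw [Finset.sum_Icc_succ_top (by omega : 1 ≤ i - 1 + 1)]
    rw [← hi']
  have hlow : ∑ j ∈ Finset.Icc 1 i, f j * a j < ∑ j ∈ Finset.Icc 1 i, f j * b j := by
    have h1 : ∑ j ∈ Finset.Icc 1 i, f j * a j < f i * (a i + 1) := by
      rw [hstep, Nat.mul_add, Nat.mul_one]; omega
    have h2 : f i * (a i + 1) ≤ f i * b i := Nat.mul_le_mul_left _ hlt
    have h3 : f i * b i ≤ ∑ j ∈ Finset.Icc 1 i, f j * b j :=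
      Finset.single_le_sum (f := fun j => f j * b j) (fun j _ => Nat.zero_le _) (Finset.mem_Icc.mpr ⟨hi1, le_rfl⟩)
    omega
  omega

private lemma lex_iff (f : ℕ → ℕ) (K lmax : ℕ) (hK : 1 ≤ K) (hf1 : f 1 = 1)
    (hfs : ∀ n : ℕ, 1 ≤ n → f (n + 1) = f n * K + 1)
    (a b : ℕ → ℕ) (haK : ∑ j ∈ Finset.Icc 1 lmax, a j ≤ K)
    (hbK : ∑ j ∈ Finset.Icc 1 lmax, b j ≤ K) :
    ∑ j ∈ Finset.Icc 1 lmax, f j * a j < ∑ j ∈ Finset.Icc 1 lmax, f j * b j ↔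
    ∃ i ∈ Finset.Icc 1 lmax, (∀ j : ℕ, i < j → j ≤ lmax → a j = b j) ∧ a i < b i := by
  constructor
  · intro h
    set S := (Finset.Icc 1 lmax).filter (fun j => a j ≠ b j) with hS
    have hSne : S.Nonempty := by
      rcases Finset.eq_empty_or_nonempty S with he | hne
      · exfalso
        have : ∑ j ∈ Finset.Icc 1 lmax, f j * a j = ∑ j ∈ Finset.Icc 1 lmax, f j * b j := by
          refine Finset.sum_congr rfl fun j hj => ?_
          have : a j = b j := by
            by_contra hne'
            have : j ∈ S := Finset.mem_filter.mpr ⟨hj, hne'⟩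
            simp [he] at this
          rw [this]
        omega
      · exact hne
    set i := S.max' hSne with hi
    have hiS : i ∈ S := S.max'_mem hSne
    obtain ⟨hiIcc, hne⟩ := Finset.mem_filter.mp hiS
    simp only [Finset.mem_Icc] at hiIcc
    have heq : ∀ j : ℕ, i < j → j ≤ lmax → a j = b j := by
      intro j hj1 hj2
      by_contra hne'
      have hjS : j ∈ S := Finset.mem_filter.mpr
        ⟨Finset.mem_Icc.mpr ⟨by omega, hj2⟩, hne'⟩
      have := S.le_max' j hjS
      omega
    have hlt : a i < b i := by
      rcases Nat.lt_or_ge (a i) (b i) with h' | h'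
      · exact h'
      · exfalso
        have hba : b i < a i := by omega
        have := lex_lt f K lmax hK hf1 hfs b a hbK i hiIcc.1 hiIcc.2
          (fun j hj1 hj2 => (heq j hj1 hj2).symm) hba
        omega
    exact ⟨i, Finset.mem_Icc.mpr hiIcc, heq, hlt⟩
  · rintro ⟨i, hi, heq, hlt⟩
    obtain ⟨hi1, hi2⟩ := Finset.mem_Icc.mp hi
    exact lex_lt f K lmax hK hf1 hfs a b haK i hi1 hi2 heq hlt

/-- the objective function `H` realizes the lexicographic comparison of the
level-wise violation costs, with higher levels being more significant. -/
theorem H_lt_iff_lex {ι : Type*} (WC : Finset ι) (hWC : WC.Nonempty)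
    (weight level : ι → ℕ) (wmax lmax : ℕ) (hlmax : 1 ≤ lmax) (hwmax : 1 ≤ wmax)
    (hw1 : ∀ w ∈ WC, 1 ≤ weight w) (hwle : ∀ w ∈ WC, weight w ≤ wmax)
    (hlev : ∀ w ∈ WC, level w ∈ Finset.Icc 1 lmax)
    (f : ℕ → ℕ) (hf1 : f 1 = 1)
    (hfs : ∀ n : ℕ, 1 ≤ n → f (n + 1) = f n * (WC.card * wmax) + 1)
    (VA VB : Finset ι) (hVA : VA ⊆ WC) (hVB : VB ⊆ WC) :
    (∑ i ∈ Finset.Icc 1 lmax,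
        f i * ∑ w ∈ VA.filter (fun w => level w = i), weight w) <
      (∑ i ∈ Finset.Icc 1 lmax,
        f i * ∑ w ∈ VB.filter (fun w => level w = i), weight w) ↔
    ∃ i ∈ Finset.Icc 1 lmax,
      (∀ j : ℕ, i < j → j ≤ lmax →
        ∑ w ∈ VA.filter (fun w => level w = j), weight w =
          ∑ w ∈ VB.filter (fun w => level w = j), weight w) ∧
      ∑ w ∈ VA.filter (fun w => level w = i), weight w <
        ∑ w ∈ VB.filter (fun w => level w = i), weight w := by
  have hK : 1 ≤ WC.card * wmax :=
    Nat.mul_pos (Finset.card_pos.mpr hWC) hwmax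
  have bound : ∀ V : Finset ι, V ⊆ WC →
      ∑ j ∈ Finset.Icc 1 lmax, (∑ w ∈ V.filter (fun w => level w = j), weight w)
        ≤ WC.card * wmax := by
    intro V hV
    rw [Finset.sum_fiberwise_of_maps_to (fun w hw => hlev w (hV hw))]
    calc ∑ w ∈ V, weight w ≤ ∑ w ∈ WC, weight w :=
          Finset.sum_le_sum_of_subset hV
      _ ≤ WC.card * wmax := by
          simpa using Finset.sum_le_card_nsmul WC weight wmax hwle
  exact lex_iff f (WC.card * wmax) lmax hK hf1 hfs
    (fun i => ∑ w ∈ VA.filter (fun w => level w = i), weight w)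
    (fun i => ∑ w ∈ VB.filter (fun w => level w = i), weight w)
    (bound VA hVA) (bound VB hVB)
end
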